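/- Let c, d be indeterminates and let y : ℕ → ℚ(c,d,y₀,y₁) satisfy y(k) = (y(k−1)² + c·y(k−1) + d)/y(k−2) for k ≥ 2, with y(0) = y₀, y(1) = y₁ indeterminates. Then every y(k) is a Laurent polynomial in y₀, y₁ with coefficients in ℤ[c,d]. -/

import Mathlib

open Polynomial in
theorem poly_no_root {A : Type*} [CommRing A] [IsDomain A] (c : A) (p q : Polynomial A)
    (hq : q ≠ 0) : p ^ 2 + Polynomial.C c * p * q + Polynomial.X * q ^ 2 ≠ 0 := by
  intro h
  by_cases hp : p = 0
  · subst hp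
    simp only [zero_pow, ne_eq, OfNat.ofNat_ne_zero, not_false_eq_true, mul_zero, zero_add,
      add_zero] at h
    rw [zero_mul, zero_add] at h
    rcases mul_eq_zero.mp h with h1 | h1
    · exact X_ne_zero h1
    · exact pow_ne_zero 2 hq h1
  · set n := p.natDegree with hn
    set m := q.natDegree with hm
    rcases le_or_gt n m with hnm | hmn
    · have hco := congrArg (fun r => Polynomial.coeff r (2 * m + 1)) h
      simp only [coeff_add, coeff_zero] at hco
      have h1 : (p ^ 2).coeff (2 * m + 1) = 0 := by
        apply coeff_eq_zero_of_natDegree_lt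
        calc (p ^ 2).natDegree ≤ 2 * n := natDegree_pow_le
        _ ≤ 2 * m := by omega
        _ < 2 * m + 1 := by omega
      have h2 : (Polynomial.C c * p * q).coeff (2 * m + 1) = 0 := by
        apply coeff_eq_zero_of_natDegree_lt
        calc (Polynomial.C c * p * q).natDegree ≤ (Polynomial.C c * p).natDegree + m :=
              natDegree_mul_le
        _ ≤ (0 + n) + m := by
              gcongr
              exact natDegree_mul_le.trans (by simp [hn])
        _ < 2 * m + 1 := by omega
      have h3 : (Polynomial.X * q ^ 2).coeff (2 * m + 1) = q.leadingCoeff * q.leadingCoeff := by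
        rw [show 2 * m + 1 = (m + m) + 1 by ring, coeff_X_mul, sq,
          coeff_mul_degree_add_degree]
      rw [h1, h2, h3] at hco
      exact hq (leadingCoeff_eq_zero.mp (mul_self_eq_zero.mp (by simpa using hco)))
    · have hco := congrArg (fun r => Polynomial.coeff r (2 * n)) h
      simp only [coeff_add, coeff_zero] at hco
      have h1 : (p ^ 2).coeff (2 * n) = p.leadingCoeff * p.leadingCoeff := by
        rw [show 2 * n = n + n by ring, sq, coeff_mul_degree_add_degree]
      have h2 : (Polynomial.C c * p * q).coeff (2 * n) = 0 := by
        apply coeff_eq_zero_of_natDegree_lt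
        calc (Polynomial.C c * p * q).natDegree ≤ (Polynomial.C c * p).natDegree + m :=
              natDegree_mul_le
        _ ≤ (0 + n) + m := by
              gcongr
              exact natDegree_mul_le.trans (by simp [hn])
        _ < 2 * n := by omega
      have h3 : (Polynomial.X * q ^ 2).coeff (2 * n) = 0 := by
        rw [show 2 * n = (2 * n - 1) + 1 by omega, coeff_X_mul]
        apply coeff_eq_zero_of_natDegree_lt
        calc (q ^ 2).natDegree ≤ 2 * m := natDegree_pow_le
        _ < 2 * n - 1 := by omega
      rw [h1, h2, h3] at hco
      exact hp (leadingCoeff_eq_zero.mp (mul_self_eq_zero.mp (by simpa using hco)))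

open MvPolynomial

def sumOptEquiv : (Fin 2 ⊕ Fin 2) ≃ Option (Fin 2 ⊕ Fin 1) where
  toFun := Sum.elim (fun i => some (Sum.inl i)) ![some (Sum.inr 0), none]
  invFun := fun o => o.elim (Sum.inr 1) (Sum.elim Sum.inl (fun _ => Sum.inr 0))
  left_inv := by decide
  right_inv := by decide

theorem mv_no_root (p q : MvPolynomial (Fin 2 ⊕ Fin 2) ℤ) (hq : q ≠ 0)
    (h : p ^ 2 + X (Sum.inr 0) * p * q + X (Sum.inr 1) * q ^ 2 = 0) : False := by
  let ψ := (renameEquiv ℤ sumOptEquiv).trans (optionEquivLeft ℤ (Fin 2 ⊕ Fin 1))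
  have hinj : Function.Injective ψ := ψ.injective
  have h2 := congrArg ψ h
  have hX0 : ψ (X (Sum.inr 0)) = Polynomial.C (X (Sum.inr 0)) := by
    show optionEquivLeft ℤ _ (rename sumOptEquiv (X (Sum.inr 0))) = _
    rw [rename_X]
    show optionEquivLeft ℤ _ (X (some (Sum.inr 0))) = _
    rw [optionEquivLeft_X_some]
  have hX1 : ψ (X (Sum.inr 1)) = Polynomial.X := by
    show optionEquivLeft ℤ _ (rename sumOptEquiv (X (Sum.inr 1))) = _
    rw [rename_X]
    show optionEquivLeft ℤ _ (X none) = _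
    rw [optionEquivLeft_X_none]
  rw [map_add, map_add, map_pow, map_mul, map_mul, map_mul, map_pow, map_zero, hX0, hX1] at h2
  exact poly_no_root (X (Sum.inr 0)) (ψ p) (ψ q)
    (fun h' => hq (hinj (by rw [h', map_zero]))) h2

/-- The recurrence y_k y_{k−2} = y_{k−1}² + c y_{k−1} + d exhibits the
Laurent phenomenon over ℤ[c,d]. -/
theorem quadratic_plus_linear_laurent
    (F : Type*) [Field F] [Algebra (MvPolynomial (Fin 2 ⊕ Fin 2) ℤ) F]
    [IsFractionRing (MvPolynomial (Fin 2 ⊕ Fin 2) ℤ) F]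
    (x : Fin 2 ⊕ Fin 2 → F)
    (hx : ∀ s, x s = algebraMap (MvPolynomial (Fin 2 ⊕ Fin 2) ℤ) F (X s))
    (c d : F) (hc : c = x (Sum.inr 0)) (hd : d = x (Sum.inr 1))
    (y : ℕ → F)
    (hy0 : y 0 = x (Sum.inl 0)) (hy1 : y 1 = x (Sum.inl 1))
    (hrec : ∀ k : ℕ, y (k + 2) = (y (k + 1) ^ 2 + c * y (k + 1) + d) / y k) :
    ∀ k : ℕ, y k ∈ Algebra.adjoin ℤ
      ({x (Sum.inl 0), x (Sum.inl 1), (x (Sum.inl 0))⁻¹, (x (Sum.inl 1))⁻¹, c, d}) := by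
  have hinj := IsFractionRing.injective (MvPolynomial (Fin 2 ⊕ Fin 2) ℤ) F
  have hxne : ∀ s, x s ≠ 0 := by
    intro s hs
    rw [hx s] at hs
    exact X_ne_zero s (hinj (by rw [hs, map_zero]))
  have noroot : ∀ t : F, t ^ 2 + c * t + d ≠ 0 := by
    intro t ht
    obtain ⟨p, q, hqnz, hpq⟩ :=
      IsFractionRing.div_surjective (A := MvPolynomial (Fin 2 ⊕ Fin 2) ℤ) t
    have hq0 : q ≠ 0 := nonZeroDivisors.ne_zero hqnz
    have hqF : algebraMap (MvPolynomial (Fin 2 ⊕ Fin 2) ℤ) F q ≠ 0 :=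
      fun h => hq0 (hinj (by rw [h, map_zero]))
    rw [← hpq, hc, hd, hx, hx] at ht
    apply mv_no_root p q hq0
    apply hinj
    have hexp : (algebraMap (MvPolynomial (Fin 2 ⊕ Fin 2) ℤ) F p) ^ 2
        + algebraMap (MvPolynomial (Fin 2 ⊕ Fin 2) ℤ) F (X (Sum.inr 0))
          * algebraMap (MvPolynomial (Fin 2 ⊕ Fin 2) ℤ) F p
          * algebraMap (MvPolynomial (Fin 2 ⊕ Fin 2) ℤ) F q
        + algebraMap (MvPolynomial (Fin 2 ⊕ Fin 2) ℤ) F (X (Sum.inr 1))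
          * (algebraMap (MvPolynomial (Fin 2 ⊕ Fin 2) ℤ) F q) ^ 2
        = ((algebraMap (MvPolynomial (Fin 2 ⊕ Fin 2) ℤ) F p
            / algebraMap (MvPolynomial (Fin 2 ⊕ Fin 2) ℤ) F q) ^ 2
          + algebraMap (MvPolynomial (Fin 2 ⊕ Fin 2) ℤ) F (X (Sum.inr 0))
            * (algebraMap (MvPolynomial (Fin 2 ⊕ Fin 2) ℤ) F p
              / algebraMap (MvPolynomial (Fin 2 ⊕ Fin 2) ℤ) F q)
          + algebraMap (MvPolynomial (Fin 2 ⊕ Fin 2) ℤ) F (X (Sum.inr 1)))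
          * (algebraMap (MvPolynomial (Fin 2 ⊕ Fin 2) ℤ) F q) ^ 2 := by
      field_simp
    rw [map_add, map_add, map_pow, map_mul, map_mul, map_mul, map_pow, map_zero,
      hexp, ht, zero_mul]
  set A := Algebra.adjoin ℤ
      ({x (Sum.inl 0), x (Sum.inl 1), (x (Sum.inl 0))⁻¹, (x (Sum.inl 1))⁻¹, c, d} : Set F)
    with hA
  have hy0m : y 0 ∈ A := by rw [hy0]; exact Algebra.subset_adjoin (by simp)
  have hy1m : y 1 ∈ A := by rw [hy1]; exact Algebra.subset_adjoin (by simp)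
  have hy0im : (y 0)⁻¹ ∈ A := by rw [hy0]; exact Algebra.subset_adjoin (by simp)
  have hy1im : (y 1)⁻¹ ∈ A := by rw [hy1]; exact Algebra.subset_adjoin (by simp)
  have hcm : c ∈ A := Algebra.subset_adjoin (by simp)
  have hdm : d ∈ A := Algebra.subset_adjoin (by simp)
  have h0 : y 0 ≠ 0 := by rw [hy0]; exact hxne _
  have h1 : y 1 ≠ 0 := by rw [hy1]; exact hxne _
  set J : F := (y 0 ^ 2 + y 1 ^ 2 + c * (y 0 + y 1) + d) * (y 0)⁻¹ * (y 1)⁻¹ with hJ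
  have hJm : J ∈ A :=
    mul_mem (mul_mem (add_mem (add_mem (add_mem (pow_mem hy0m 2) (pow_mem hy1m 2))
      (mul_mem hcm (add_mem hy0m hy1m))) hdm) hy0im) hy1im
  have key : ∀ k, y k ≠ 0 ∧ y (k + 1) ≠ 0 ∧ y k ∈ A ∧ y (k + 1) ∈ A ∧
      y k ^ 2 + y (k + 1) ^ 2 + c * (y k + y (k + 1)) + d = J * (y k * y (k + 1)) := by
    intro k
    induction k with
    | zero =>
      refine ⟨h0, h1, hy0m, hy1m, ?_⟩
      rw [hJ]
      field_simp
    | succ k ih =>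
      obtain ⟨hk, hk1, mk, mk1, inv⟩ := ih
      have hkey : y (k + 2) * y k = y (k + 1) ^ 2 + c * y (k + 1) + d := by
        rw [hrec k, div_mul_cancel₀ _ hk]
      have hk2ne : y (k + 2) ≠ 0 := by
        intro h
        apply noroot (y (k + 1))
        rw [← hkey, h, zero_mul]
      have hform : y (k + 2) = J * y (k + 1) - y k - c := by
        apply mul_right_cancel₀ hk
        rw [hkey]
        linear_combination inv
      exact ⟨hk1, hk2ne, mk1, by
          rw [hform]; exact sub_mem (sub_mem (mul_mem hJm mk1) mk) hcm, by
          rw [hform]; linear_combination inv⟩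
  intro k
  exact (key k).2.2.1
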